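/- Let H = {H_α}_{α∈π} be a finite type Hopf π-coalgebra, λ = (λ_α) a right π-integral for H, and Λ a left integral for H_1 with λ_1(Λ) = 1. Then for every α ∈ π and a ∈ H_α, Tr(r(a) ∘ S_{α⁻¹}S_α) = ε(Λ) λ_α(a), where r(a) denotes right multiplication by a on H_α. -/

import Mathlib

set_option maxHeartbeats 1000000
set_option synthInstance.maxHeartbeats 400000

open TensorProduct

set_option linter.unusedSectionVars false

/-- The canonical `k`-linear isomorphism-as-map `H α →ₗ[k] H β` induced by an equality `α = β`. -/
def Lcast (k : Type*) [CommSemiring k] {π : Type*} (H : π → Type*)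
    [∀ α, AddCommMonoid (H α)] [∀ α, Module k (H α)] {α β : π} (h : α = β) :
    H α →ₗ[k] H β := by subst h; exact LinearMap.id

/-- A Hopf `π`-coalgebra over a field `k` (Turaev): a family of `k`-algebras `H α`
with comultiplication `Δ α β : H (α * β) →ₐ[k] H α ⊗[k] H β`, counit `ε : H 1 →ₐ[k] k`
and antipode `S α : H α →ₗ[k] H α⁻¹`, satisfying coassociativity, counit and
antipode axioms. -/
structure HopfGroupCoalgebra (k : Type*) [Field k] (π : Type*) [Group π]
    (H : π → Type*) [∀ α, Ring (H α)] [∀ α, Algebra k (H α)] where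
  Δ : ∀ α β : π, H (α * β) →ₐ[k] TensorProduct k (H α) (H β)
  ε : H (1 : π) →ₐ[k] k
  S : ∀ α : π, H α →ₗ[k] H α⁻¹
  coassoc : ∀ (α β γ : π) (x : H (α * β * γ)),
    (TensorProduct.assoc k (H α) (H β) (H γ))
        (TensorProduct.map (Δ α β).toLinearMap LinearMap.id (Δ (α * β) γ x)) =
      TensorProduct.map LinearMap.id (Δ β γ).toLinearMap
        (Δ α (β * γ) (Lcast k H (mul_assoc α β γ) x))
  counit_right : ∀ (α : π) (x : H (α * 1)),
    (TensorProduct.rid k (H α))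
        (TensorProduct.map LinearMap.id ε.toLinearMap (Δ α 1 x)) =
      Lcast k H (mul_one α) x
  counit_left : ∀ (α : π) (x : H (1 * α)),
    (TensorProduct.lid k (H α))
        (TensorProduct.map ε.toLinearMap LinearMap.id (Δ 1 α x)) =
      Lcast k H (one_mul α) x
  antipode_left : ∀ (α : π) (x : H (α⁻¹ * α)),
    (LinearMap.mul' k (H α))
        (TensorProduct.map ((Lcast k H (inv_inv α)).comp (S α⁻¹)) LinearMap.id (Δ α⁻¹ α x)) =
      ε (Lcast k H (inv_mul_cancel α) x) • (1 : H α)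
  antipode_right : ∀ (α : π) (x : H (α * α⁻¹)),
    (LinearMap.mul' k (H α))
        (TensorProduct.map LinearMap.id ((Lcast k H (inv_inv α)).comp (S α⁻¹)) (Δ α α⁻¹ x)) =
      ε (Lcast k H (mul_inv_cancel α) x) • (1 : H α)

section castkit
variable (k : Type*) [Field k] {π : Type*} [Group π] (H : π → Type*)
    [∀ α, Ring (H α)] [∀ α, Algebra k (H α)]

theorem Lcast_eq_id {γ : π} (h : γ = γ) : Lcast k H h = LinearMap.id := rfl

theorem Lcast_Lcast {γ δ η : π} (h1 : γ = δ) (h2 : δ = η) (x : H γ) :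
    Lcast k H h2 (Lcast k H h1 x) = Lcast k H (h1.trans h2) x := by subst h1; subst h2; rfl

theorem Lcast_cancel {γ δ : π} (h1 : γ = δ) (h2 : δ = γ) (x : H γ) :
    Lcast k H h2 (Lcast k H h1 x) = x := by subst h1; rfl

theorem Lcast_mul {γ δ : π} (h : γ = δ) (x y : H γ) :
    Lcast k H h (x * y) = Lcast k H h x * Lcast k H h y := by subst h; rfl

theorem Lcast_one {γ δ : π} (h : γ = δ) : Lcast k H h (1 : H γ) = 1 := by subst h; rfl

theorem lam_Lcast (lam : ∀ α : π, H α →ₗ[k] k) {γ δ : π} (h : γ = δ) (x : H γ) :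
    lam δ (Lcast k H h x) = lam γ x := by subst h; rfl

variable (Hc : HopfGroupCoalgebra k π H)

theorem S_Lcast {γ δ : π} (h : γ = δ) (x : H γ) :
    Hc.S δ (Lcast k H h x) = Lcast k H (congrArg Inv.inv h) (Hc.S γ x) := by subst h; rfl

theorem eps_Lcast {γ : π} (h : γ = 1) (h' : γ = 1) (x : H γ) :
    Hc.ε (Lcast k H h x) = Hc.ε (Lcast k H h' x) := rfl

theorem Δ_Lcast {γ γ' δ δ' : π} (hγ : γ = γ') (hδ : δ = δ') (h : γ * δ = γ' * δ')
    (x : H (γ * δ)) :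
    Hc.Δ γ' δ' (Lcast k H h x) =
      TensorProduct.map (Lcast k H hγ) (Lcast k H hδ) (Hc.Δ γ δ x) := by
  subst hγ; subst hδ
  show Hc.Δ γ δ x = TensorProduct.map LinearMap.id LinearMap.id (Hc.Δ γ δ x)
  rw [TensorProduct.map_id]
  rfl

end castkit

section helper
variable {R : Type*} [CommSemiring R] {A A' B B' C C' : Type*}
  [AddCommMonoid A] [AddCommMonoid A'] [AddCommMonoid B] [AddCommMonoid B']
  [AddCommMonoid C] [AddCommMonoid C'] [Module R A] [Module R A'] [Module R B]
  [Module R B'] [Module R C] [Module R C']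

theorem map_map (f : B →ₗ[R] C) (g : A →ₗ[R] B) (f' : B' →ₗ[R] C') (g' : A' →ₗ[R] B')
    (y : A ⊗[R] A') :
    TensorProduct.map f f' (TensorProduct.map g g' y) =
      TensorProduct.map (f ∘ₗ g) (f' ∘ₗ g') y := by
  rw [← LinearMap.comp_apply, ← TensorProduct.map_comp]
end helper

section derived
variable {k : Type*} [Field k] {π : Type*} [Group π] {H : π → Type*}
    [∀ α, Ring (H α)] [∀ α, Algebra k (H α)] (Hc : HopfGroupCoalgebra k π H)

/-- `Δ_{β,β⁻¹}` precomposed with the cast `H 1 → H (β β⁻¹)`. -/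
noncomputable def dl (β : π) : H (1 : π) →ₗ[k] H β ⊗[k] H β⁻¹ :=
  (Hc.Δ β β⁻¹).toLinearMap ∘ₗ Lcast k H (mul_inv_cancel β).symm

/-- `Δ_{β⁻¹,β}` precomposed with the cast `H 1 → H (β⁻¹ β)`. -/
noncomputable def dr (β : π) : H (1 : π) →ₗ[k] H β⁻¹ ⊗[k] H β :=
  (Hc.Δ β⁻¹ β).toLinearMap ∘ₗ Lcast k H (inv_mul_cancel β).symm

/-- `Δ_{β,1}` precomposed with the cast `H β → H (β 1)`. -/
noncomputable def done (β : π) : H β →ₗ[k] H β ⊗[k] H (1 : π) :=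
  (Hc.Δ β 1).toLinearMap ∘ₗ Lcast k H (mul_one β).symm

/-- `Δ_{1,β}` precomposed with the cast `H β → H (1 β)`. -/
noncomputable def dtwo (β : π) : H β →ₗ[k] H (1 : π) ⊗[k] H β :=
  (Hc.Δ 1 β).toLinearMap ∘ₗ Lcast k H (one_mul β).symm

theorem dl_mul (β : π) (x y : H (1:π)) : dl Hc β (x * y) = dl Hc β x * dl Hc β y := by
  simp [dl, Lcast_mul, map_mul]

theorem dr_mul (β : π) (x y : H (1:π)) : dr Hc β (x * y) = dr Hc β x * dr Hc β y := by
  simp [dr, Lcast_mul, map_mul]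

theorem done_mul (β : π) (x y : H β) : done Hc β (x * y) = done Hc β x * done Hc β y := by
  simp [done, Lcast_mul, map_mul]

theorem dtwo_mul (β : π) (x y : H β) : dtwo Hc β (x * y) = dtwo Hc β x * dtwo Hc β y := by
  simp [dtwo, Lcast_mul, map_mul]

theorem dl_one (β : π) : dl Hc β 1 = 1 := by simp [dl, Lcast_one]
theorem dr_one (β : π) : dr Hc β 1 = 1 := by simp [dr, Lcast_one]

/-- `m ∘ (S_β ⊗ id) ∘ Δ_{β,β⁻¹}` kills `H 1` to `ε(w) 1`. -/
theorem ALp (β : π) (w : H (1:π)) :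
    LinearMap.mul' k (H β⁻¹) (TensorProduct.map (Hc.S β) LinearMap.id (dl Hc β w)) =
      Hc.ε w • 1 := by
  have h2 : β * β⁻¹ = β⁻¹⁻¹ * β⁻¹ := by rw [inv_inv]
  have h0 := Hc.antipode_left β⁻¹ (Lcast k H h2 (Lcast k H (mul_inv_cancel β).symm w))
  rw [Δ_Lcast k H Hc (inv_inv β).symm rfl h2] at h0
  rw [_root_.map_map] at h0
  have hS : (((Lcast k H (inv_inv β⁻¹)).comp (Hc.S β⁻¹⁻¹)) ∘ₗ Lcast k H (inv_inv β).symm)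
      = Hc.S β := by
    ext u
    simp only [LinearMap.comp_apply, LinearMap.coe_comp, Function.comp_apply]
    rw [S_Lcast, Lcast_Lcast]
    rfl
  have hid : (LinearMap.id ∘ₗ Lcast k H (rfl : (β⁻¹ : π) = β⁻¹) :
      H β⁻¹ →ₗ[k] H β⁻¹) = LinearMap.id := rfl
  rw [hS, hid] at h0
  rw [Lcast_Lcast, Lcast_Lcast] at h0
  have hε : Hc.ε (Lcast k H (((mul_inv_cancel β).symm.trans h2).trans (inv_mul_cancel β⁻¹)) w)
      = Hc.ε w := rfl
  rw [hε] at h0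
  exact h0

/-- `m ∘ (id ⊗ S_β) ∘ Δ_{β⁻¹,β}` kills `H 1` to `ε(w) 1`. -/
theorem ARp (β : π) (w : H (1:π)) :
    LinearMap.mul' k (H β⁻¹) (TensorProduct.map LinearMap.id (Hc.S β) (dr Hc β w)) =
      Hc.ε w • 1 := by
  have h2 : β⁻¹ * β = β⁻¹ * β⁻¹⁻¹ := by rw [inv_inv]
  have h0 := Hc.antipode_right β⁻¹ (Lcast k H h2 (Lcast k H (inv_mul_cancel β).symm w))
  rw [Δ_Lcast k H Hc rfl (inv_inv β).symm h2] at h0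
  rw [_root_.map_map] at h0
  have hS : (((Lcast k H (inv_inv β⁻¹)).comp (Hc.S β⁻¹⁻¹)) ∘ₗ Lcast k H (inv_inv β).symm)
      = Hc.S β := by
    ext u
    simp only [LinearMap.comp_apply, LinearMap.coe_comp, Function.comp_apply]
    rw [S_Lcast, Lcast_Lcast]
    rfl
  have hid : (LinearMap.id ∘ₗ Lcast k H (rfl : (β⁻¹ : π) = β⁻¹) :
      H β⁻¹ →ₗ[k] H β⁻¹) = LinearMap.id := rfl
  rw [hS, hid] at h0
  rw [Lcast_Lcast, Lcast_Lcast] at h0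
  have hε : Hc.ε (Lcast k H (((inv_mul_cancel β).symm.trans h2).trans (mul_inv_cancel β⁻¹)) w)
      = Hc.ε w := rfl
  rw [hε] at h0
  exact h0

/-- `antipode_right` in terms of `dl`. -/
theorem ARs (β : π) (w : H (1:π)) :
    LinearMap.mul' k (H β) (TensorProduct.map LinearMap.id
      ((Lcast k H (inv_inv β)).comp (Hc.S β⁻¹)) (dl Hc β w)) = Hc.ε w • 1 := by
  have h0 := Hc.antipode_right β (Lcast k H (mul_inv_cancel β).symm w)
  have hε : Hc.ε (Lcast k H (mul_inv_cancel β) (Lcast k H (mul_inv_cancel β).symm w))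
      = Hc.ε w := by rw [Lcast_cancel]
  rw [hε] at h0
  exact h0

/-- counit on the left. -/
theorem CLp (β : π) (z : H β) :
    (TensorProduct.lid k (H β)) (TensorProduct.map Hc.ε.toLinearMap LinearMap.id
      (dtwo Hc β z)) = z := by
  have h0 := Hc.counit_left β (Lcast k H (one_mul β).symm z)
  rw [Lcast_cancel] at h0
  exact h0

/-- counit on the right. -/
theorem CRp (β : π) (z : H β) :
    (TensorProduct.rid k (H β)) (TensorProduct.map LinearMap.id Hc.ε.toLinearMap
      (done Hc β z)) = z := by
  have h0 := Hc.counit_right β (Lcast k H (mul_one β).symm z)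
  rw [Lcast_cancel] at h0
  exact h0

/-- The coassociativity instance relating `done`/`dr` with `dtwo`/`dl`. -/
theorem Rcoassoc (β : π) (z : H β) :
    (TensorProduct.assoc k (H β) (H β⁻¹) (H β))
        (TensorProduct.map (dl Hc β) LinearMap.id (dtwo Hc β z)) =
      TensorProduct.map LinearMap.id (dr Hc β) (done Hc β z) := by
  have h : β = β * β⁻¹ * β := by rw [mul_inv_cancel, one_mul]
  have h0 := Hc.coassoc β β⁻¹ β (Lcast k H h z)
  have h1 : β * β⁻¹ * β = 1 * β := by rw [mul_inv_cancel]
  -- left side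
  have e1 : Hc.Δ (β * β⁻¹) β (Lcast k H h z)
      = TensorProduct.map (Lcast k H (mul_inv_cancel β).symm) (Lcast k H rfl)
          (Hc.Δ 1 β (Lcast k H (one_mul β).symm z)) := by
    rw [← Δ_Lcast k H Hc (mul_inv_cancel β).symm rfl h1.symm, Lcast_Lcast]
  rw [e1, _root_.map_map] at h0
  -- right side
  have h3 : β = β * (β⁻¹ * β) := by rw [inv_mul_cancel, mul_one]
  have h4 : β * 1 = β * (β⁻¹ * β) := by rw [inv_mul_cancel]
  have e2 : Hc.Δ β (β⁻¹ * β) (Lcast k H (mul_assoc β β⁻¹ β) (Lcast k H h z))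
      = TensorProduct.map (Lcast k H rfl) (Lcast k H (inv_mul_cancel β).symm)
          (Hc.Δ β 1 (Lcast k H (mul_one β).symm z)) := by
    rw [Lcast_Lcast, ← Lcast_Lcast k H (mul_one β).symm h4 z]
    exact Δ_Lcast k H Hc rfl (inv_mul_cancel β).symm h4 _
  rw [e2, _root_.map_map] at h0
  have c1 : ((Hc.Δ β β⁻¹).toLinearMap ∘ₗ Lcast k H (mul_inv_cancel β).symm) = dl Hc β := rfl
  have c2 : (LinearMap.id ∘ₗ Lcast k H (rfl : (β:π) = β) : H β →ₗ[k] H β)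
      = LinearMap.id := rfl
  have c3 : ((Hc.Δ β⁻¹ β).toLinearMap ∘ₗ Lcast k H (inv_mul_cancel β).symm) = dr Hc β := rfl
  rw [c1, c2, c3] at h0
  exact h0

theorem S_one (β : π) : Hc.S β 1 = 1 := by
  have h := ALp Hc β 1
  rw [dl_one] at h
  simp only [Algebra.TensorProduct.one_def, TensorProduct.map_tmul, LinearMap.id_coe, id_eq,
    LinearMap.mul'_apply, mul_one, map_one, one_smul] at h
  exact h

/-- The auxiliary map `u ⊗ (v ⊗ w) ↦ (S u · v) ⊗ w`. -/
noncomputable def gam (β : π) :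
    (H β ⊗[k] (H β⁻¹ ⊗[k] H β)) →ₗ[k] (H β⁻¹ ⊗[k] H β) :=
  (TensorProduct.map (LinearMap.mul' k (H β⁻¹)) LinearMap.id) ∘ₗ
    (TensorProduct.assoc k (H β⁻¹) (H β⁻¹) (H β)).symm.toLinearMap ∘ₗ
      (TensorProduct.map (Hc.S β) LinearMap.id)

theorem gam_tmul (β : π) (p : H β) (Y : H β⁻¹ ⊗[k] H β) :
    gam Hc β (p ⊗ₜ Y) = ((Hc.S β p) ⊗ₜ (1 : H β)) * Y := by
  induction Y using TensorProduct.induction_on with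
  | zero => rw [tmul_zero, map_zero, mul_zero]
  | tmul v w =>
    simp [gam, Algebra.TensorProduct.tmul_mul_tmul, one_mul]
  | add Y₁ Y₂ ih₁ ih₂ =>
    rw [tmul_add, map_add, ih₁, ih₂, mul_add]

theorem gam_assoc_tmul (β : π) (Y : H β ⊗[k] H β⁻¹) (hh : H β) :
    gam Hc β ((TensorProduct.assoc k (H β) (H β⁻¹) (H β)) (Y ⊗ₜ hh)) =
      (LinearMap.mul' k (H β⁻¹) (TensorProduct.map (Hc.S β) LinearMap.id Y)) ⊗ₜ hh := by
  induction Y using TensorProduct.induction_on with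
  | zero =>
    simp only [zero_tmul, map_zero, LinearEquiv.map_zero]
  | tmul u v => simp [gam]
  | add Y₁ Y₂ ih₁ ih₂ =>
    rw [add_tmul, LinearEquiv.map_add, map_add, ih₁, ih₂, map_add, map_add, add_tmul]

theorem keyK (β : π) (z : H β) :
    gam Hc β (TensorProduct.map LinearMap.id (dr Hc β) (done Hc β z)) =
      (1 : H β⁻¹) ⊗ₜ z := by
  have h0 : TensorProduct.map LinearMap.id (dr Hc β) (done Hc β z)
      = (TensorProduct.assoc k (H β) (H β⁻¹) (H β))
          (TensorProduct.map (dl Hc β) LinearMap.id (dtwo Hc β z)) := (Rcoassoc Hc β z).symm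
  obtain ⟨s, hs⟩ := TensorProduct.exists_finset (dtwo Hc β z)
  have hz : z = ∑ c ∈ s, Hc.ε c.1 • c.2 := by
    have h1 := CLp Hc β z
    rw [hs, map_sum, map_sum] at h1
    simp only [TensorProduct.map_tmul, LinearMap.id_coe, id_eq, AlgHom.toLinearMap_apply,
      TensorProduct.lid_tmul] at h1
    exact h1.symm
  rw [h0, hs, map_sum, map_sum, map_sum]
  calc ∑ c ∈ s, gam Hc β ((TensorProduct.assoc k (H β) (H β⁻¹) (H β))
        (TensorProduct.map (dl Hc β) LinearMap.id (c.1 ⊗ₜ c.2)))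
      = ∑ c ∈ s, (Hc.ε c.1 • (1 : H β⁻¹)) ⊗ₜ c.2 := by
        refine Finset.sum_congr rfl fun c _ => ?_
        rw [TensorProduct.map_tmul, LinearMap.id_coe, id_eq, gam_assoc_tmul, ALp]
    _ = (1 : H β⁻¹) ⊗ₜ z := by
        rw [hz, tmul_sum]
        refine Finset.sum_congr rfl fun c _ => ?_
        rw [TensorProduct.smul_tmul]

theorem keyK' (β : π) (z : H β) (s : Finset (H β × H (1:π)))
    (hs : done Hc β z = ∑ p ∈ s, p.1 ⊗ₜ p.2) :
    ∑ p ∈ s, ((Hc.S β p.1) ⊗ₜ (1 : H β)) * (dr Hc β p.2) = (1 : H β⁻¹) ⊗ₜ z := by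
  have h := keyK Hc β z
  rw [hs, map_sum, map_sum] at h
  calc ∑ p ∈ s, ((Hc.S β p.1) ⊗ₜ (1 : H β)) * (dr Hc β p.2)
      = ∑ p ∈ s, gam Hc β (TensorProduct.map LinearMap.id (dr Hc β) (p.1 ⊗ₜ p.2)) := by
        refine Finset.sum_congr rfl fun p _ => ?_
        rw [TensorProduct.map_tmul, LinearMap.id_coe, id_eq, gam_tmul]
    _ = (1 : H β⁻¹) ⊗ₜ z := h

theorem W1 (β : π) (c : H β⁻¹) (g : H β →ₗ[k] H β⁻¹) (W : H β⁻¹ ⊗[k] H β) :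
    c * LinearMap.mul' k (H β⁻¹) (TensorProduct.map LinearMap.id g W) =
      LinearMap.mul' k (H β⁻¹) (TensorProduct.map LinearMap.id g
        ((c ⊗ₜ (1 : H β)) * W)) := by
  induction W using TensorProduct.induction_on with
  | zero => simp
  | tmul v w =>
    simp [Algebra.TensorProduct.tmul_mul_tmul, one_mul, LinearMap.mul'_apply, mul_assoc]
  | add W₁ W₂ ih₁ ih₂ =>
    rw [mul_add, map_add, map_add, mul_add, ih₁, ih₂, map_add, map_add]

theorem W2 (β : π) (x : H β) (W : H β⁻¹ ⊗[k] H β) :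
    LinearMap.mul' k (H β⁻¹) (TensorProduct.map LinearMap.id (Hc.S β)
        (((1 : H β⁻¹) ⊗ₜ x) * W)) =
      LinearMap.mul' k (H β⁻¹) (TensorProduct.map LinearMap.id
        ((Hc.S β) ∘ₗ (LinearMap.mulLeft k x)) W) := by
  induction W using TensorProduct.induction_on with
  | zero => simp
  | tmul v w =>
    simp [Algebra.TensorProduct.tmul_mul_tmul, one_mul, LinearMap.mul'_apply]
  | add W₁ W₂ ih₁ ih₂ =>
    rw [mul_add, map_add, map_add, ih₁, ih₂, map_add, map_add]

/-- The antipode is anti-multiplicative. -/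
theorem S_antimul (β : π) (x y : H β) :
    Hc.S β (x * y) = Hc.S β y * Hc.S β x := by
  obtain ⟨sx, hx⟩ := TensorProduct.exists_finset (done Hc β x)
  obtain ⟨sy, hy⟩ := TensorProduct.exists_finset (done Hc β y)
  have hxe : x = ∑ p ∈ sx, Hc.ε p.2 • p.1 := by
    have h1 := CRp Hc β x
    rw [hx, map_sum, map_sum] at h1
    simp only [TensorProduct.map_tmul, LinearMap.id_coe, id_eq, AlgHom.toLinearMap_apply,
      TensorProduct.rid_tmul] at h1
    exact h1.symm
  have hye : y = ∑ q ∈ sy, Hc.ε q.2 • q.1 := by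
    have h1 := CRp Hc β y
    rw [hy, map_sum, map_sum] at h1
    simp only [TensorProduct.map_tmul, LinearMap.id_coe, id_eq, AlgHom.toLinearMap_apply,
      TensorProduct.rid_tmul] at h1
    exact h1.symm
  -- the pivot expression
  have way1 : (∑ q ∈ sy, ∑ p ∈ sx, Hc.S β q.1 * (Hc.S β p.1 *
      LinearMap.mul' k (H β⁻¹) (TensorProduct.map LinearMap.id (Hc.S β)
        (dr Hc β (p.2 * q.2))))) = Hc.S β y * Hc.S β x := by
    calc (∑ q ∈ sy, ∑ p ∈ sx, Hc.S β q.1 * (Hc.S β p.1 *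
        LinearMap.mul' k (H β⁻¹) (TensorProduct.map LinearMap.id (Hc.S β)
          (dr Hc β (p.2 * q.2)))))
        = ∑ q ∈ sy, ∑ p ∈ sx, (Hc.ε q.2 • Hc.S β q.1) * (Hc.ε p.2 • Hc.S β p.1) := by
          refine Finset.sum_congr rfl fun q _ => Finset.sum_congr rfl fun p _ => ?_
          rw [ARp, map_mul]
          simp only [mul_smul_comm, mul_one, smul_mul_assoc, smul_smul]
      _ = Hc.S β y * Hc.S β x := by
          rw [← Finset.sum_mul_sum]
          rw [hxe, hye, map_sum, map_sum]
          simp [map_smul]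
  have way2 : (∑ q ∈ sy, ∑ p ∈ sx, Hc.S β q.1 * (Hc.S β p.1 *
      LinearMap.mul' k (H β⁻¹) (TensorProduct.map LinearMap.id (Hc.S β)
        (dr Hc β (p.2 * q.2))))) = Hc.S β (x * y) := by
    have step1 : ∀ q ∈ sy, (∑ p ∈ sx, Hc.S β p.1 *
        LinearMap.mul' k (H β⁻¹) (TensorProduct.map LinearMap.id (Hc.S β)
          (dr Hc β (p.2 * q.2)))) =
        LinearMap.mul' k (H β⁻¹) (TensorProduct.map LinearMap.id
          ((Hc.S β) ∘ₗ (LinearMap.mulLeft k x)) (dr Hc β q.2)) := by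
      intro q _
      calc (∑ p ∈ sx, Hc.S β p.1 *
          LinearMap.mul' k (H β⁻¹) (TensorProduct.map LinearMap.id (Hc.S β)
            (dr Hc β (p.2 * q.2))))
          = ∑ p ∈ sx, LinearMap.mul' k (H β⁻¹) (TensorProduct.map LinearMap.id (Hc.S β)
              ((((Hc.S β p.1) ⊗ₜ (1 : H β)) * dr Hc β p.2) * dr Hc β q.2)) := by
            refine Finset.sum_congr rfl fun p _ => ?_
            rw [dr_mul, W1, mul_assoc]
        _ = LinearMap.mul' k (H β⁻¹) (TensorProduct.map LinearMap.id (Hc.S β)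
              ((((1 : H β⁻¹) ⊗ₜ x)) * dr Hc β q.2)) := by
            rw [← map_sum, ← map_sum, ← Finset.sum_mul, keyK' Hc β x sx hx]
        _ = LinearMap.mul' k (H β⁻¹) (TensorProduct.map LinearMap.id
              ((Hc.S β) ∘ₗ (LinearMap.mulLeft k x)) (dr Hc β q.2)) := W2 Hc β x _
    calc (∑ q ∈ sy, ∑ p ∈ sx, Hc.S β q.1 * (Hc.S β p.1 *
        LinearMap.mul' k (H β⁻¹) (TensorProduct.map LinearMap.id (Hc.S β)
          (dr Hc β (p.2 * q.2)))))
        = ∑ q ∈ sy, Hc.S β q.1 * LinearMap.mul' k (H β⁻¹)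
            (TensorProduct.map LinearMap.id
              ((Hc.S β) ∘ₗ (LinearMap.mulLeft k x)) (dr Hc β q.2)) := by
          refine Finset.sum_congr rfl fun q hq => ?_
          rw [← Finset.mul_sum, step1 q hq]
      _ = ∑ q ∈ sy, LinearMap.mul' k (H β⁻¹) (TensorProduct.map LinearMap.id
            ((Hc.S β) ∘ₗ (LinearMap.mulLeft k x))
            ((((Hc.S β q.1) ⊗ₜ (1 : H β)) * dr Hc β q.2))) := by
          refine Finset.sum_congr rfl fun q _ => ?_
          rw [W1]
      _ = LinearMap.mul' k (H β⁻¹) (TensorProduct.map LinearMap.id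
            ((Hc.S β) ∘ₗ (LinearMap.mulLeft k x)) ((1 : H β⁻¹) ⊗ₜ y)) := by
          rw [← map_sum, ← map_sum, keyK' Hc β y sy hy]
      _ = Hc.S β (x * y) := by
          simp [LinearMap.mul'_apply]
  rw [← way2, way1]

end derived

section mainsec
variable {k : Type*} [Field k] {π : Type*} [Group π] {H : π → Type*}
    [∀ α, Ring (H α)] [∀ α, Algebra k (H α)] [∀ α, FiniteDimensional k (H α)]
    (Hc : HopfGroupCoalgebra k π H)
    (lam : ∀ α : π, H α →ₗ[k] k)
    (hlam : ∀ (α β : π) (x : H (α * β)),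
      (TensorProduct.lid k (H β))
          (TensorProduct.map (lam α) LinearMap.id (Hc.Δ α β x)) =
        lam (α * β) x • (1 : H β))
    (Λ : H (1 : π))
    (hΛ : ∀ x : H (1 : π), x * Λ = Hc.ε x • Λ)
    (hnorm : lam 1 Λ = 1)

/-- Coassociativity instance relating `dtwo ⊗ id ∘ dl` with `id ⊗ dl ∘ done₁`. -/
theorem Rcoassoc2 (α : π) (w : H (1:π)) :
    (TensorProduct.assoc k (H (1:π)) (H α) (H α⁻¹))
        (TensorProduct.map (dtwo Hc α) LinearMap.id (dl Hc α w)) =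
      TensorProduct.map LinearMap.id (dl Hc α) (done Hc 1 w) := by
  have h : (1:π) = 1 * α * α⁻¹ := by rw [one_mul, mul_inv_cancel]
  have h0 := Hc.coassoc 1 α α⁻¹ (Lcast k H h w)
  have h1 : α * α⁻¹ = 1 * α * α⁻¹ := by rw [one_mul]
  have e1 : Hc.Δ (1 * α) α⁻¹ (Lcast k H h w)
      = TensorProduct.map (Lcast k H (one_mul α).symm) (Lcast k H rfl)
          (Hc.Δ α α⁻¹ (Lcast k H (mul_inv_cancel α).symm w)) := by
    rw [← Δ_Lcast k H Hc (one_mul α).symm rfl h1, Lcast_Lcast]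
  rw [e1, _root_.map_map] at h0
  have h4 : (1:π) * 1 = 1 * (α * α⁻¹) := by rw [mul_inv_cancel]
  have e2 : Hc.Δ 1 (α * α⁻¹) (Lcast k H (mul_assoc 1 α α⁻¹) (Lcast k H h w))
      = TensorProduct.map (Lcast k H rfl) (Lcast k H (mul_inv_cancel α).symm)
          (Hc.Δ 1 1 (Lcast k H (mul_one 1).symm w)) := by
    rw [Lcast_Lcast, ← Lcast_Lcast k H (mul_one (1:π)).symm h4 w]
    exact Δ_Lcast k H Hc rfl (mul_inv_cancel α).symm h4 _
  rw [e2, _root_.map_map] at h0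
  have c1 : ((Hc.Δ 1 α).toLinearMap ∘ₗ Lcast k H (one_mul α).symm) = dtwo Hc α := rfl
  have c2 : (LinearMap.id ∘ₗ Lcast k H (rfl : (α⁻¹:π) = α⁻¹) :
      H α⁻¹ →ₗ[k] H α⁻¹) = LinearMap.id := rfl
  have c3 : ((Hc.Δ α α⁻¹).toLinearMap ∘ₗ Lcast k H (mul_inv_cancel α).symm) = dl Hc α := rfl
  have c4 : (LinearMap.id ∘ₗ Lcast k H (rfl : (1:π) = 1) :
      H (1:π) →ₗ[k] H (1:π)) = LinearMap.id := rfl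
  rw [c1, c2, c3, c4] at h0
  exact h0
include hlam hΛ hnorm in
/-- The fundamental expansion: `x = Σ λ_α(x Λ₍₁₎) S'(Λ₍₂₎)`. -/
theorem starstar (α : π) (x : H α) :
    (TensorProduct.lid k (H α)) (TensorProduct.map
      ((lam α) ∘ₗ (LinearMap.mulLeft k x))
      ((Lcast k H (inv_inv α)).comp (Hc.S α⁻¹)) (dl Hc α Λ)) = x := by
  set Sp : H α⁻¹ →ₗ[k] H α := (Lcast k H (inv_inv α)).comp (Hc.S α⁻¹) with hSp
  obtain ⟨s, hs⟩ := TensorProduct.exists_finset (dl Hc α Λ)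
  obtain ⟨sm, hm⟩ := TensorProduct.exists_finset (dtwo Hc α x)
  obtain ⟨sj, hj⟩ := TensorProduct.exists_finset (done Hc 1 Λ)
  have he1 : ∀ u : H α, (TensorProduct.lid k (H α))
      (TensorProduct.map (lam 1) LinearMap.id (dtwo Hc α u)) = lam α u • 1 := by
    intro u
    have h0 := hlam 1 α (Lcast k H (one_mul α).symm u)
    rw [lam_Lcast] at h0
    exact h0
  set EE : H (1:π) ⊗[k] (H α ⊗[k] H α⁻¹) →ₗ[k] H α :=
    (TensorProduct.lid k (H α)).toLinearMap ∘ₗ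
      TensorProduct.map (lam 1)
        ((LinearMap.mul' k (H α)) ∘ₗ TensorProduct.map LinearMap.id Sp) with hEE
  have EEapp : ∀ (c : H (1:π)) (w : H α ⊗[k] H α⁻¹),
      EE (c ⊗ₜ w) = lam 1 c •
        (LinearMap.mul' k (H α)) (TensorProduct.map LinearMap.id Sp w) := by
    intro c w
    simp [hEE, TensorProduct.lid_tmul]
  have claimA : ∀ (u : H α) (v : H α⁻¹),
      EE ((TensorProduct.assoc k (H (1:π)) (H α) (H α⁻¹)) ((dtwo Hc α u) ⊗ₜ v))
        = lam α u • Sp v := by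
    intro u v
    have gen : ∀ Y : H (1:π) ⊗[k] H α,
        EE ((TensorProduct.assoc k (H (1:π)) (H α) (H α⁻¹)) (Y ⊗ₜ v))
          = ((TensorProduct.lid k (H α))
              (TensorProduct.map (lam 1) LinearMap.id Y)) * Sp v := by
      intro Y
      induction Y using TensorProduct.induction_on with
      | zero => simp
      | tmul c u =>
        rw [TensorProduct.assoc_tmul, EEapp]
        simp only [TensorProduct.map_tmul, LinearMap.id_coe, id_eq,
          TensorProduct.lid_tmul, LinearMap.mul'_apply, smul_mul_assoc]
      | add Y₁ Y₂ ih₁ ih₂ =>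
        rw [add_tmul, LinearEquiv.map_add, map_add, ih₁, ih₂, map_add, map_add, add_mul]
    rw [gen (dtwo Hc α u), he1 u, smul_mul_assoc, one_mul]
  have claimB : ∀ (a : H (1:π)) (b : H α) (Y : H (1:π) ⊗[k] H α) (v : H α⁻¹),
      (TensorProduct.assoc k (H (1:π)) (H α) (H α⁻¹)) (((a ⊗ₜ b) * Y) ⊗ₜ v) =
        TensorProduct.map (LinearMap.mulLeft k a)
          (TensorProduct.map (LinearMap.mulLeft k b) LinearMap.id)
          ((TensorProduct.assoc k (H (1:π)) (H α) (H α⁻¹)) (Y ⊗ₜ v)) := by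
    intro a b Y v
    induction Y using TensorProduct.induction_on with
    | zero => simp
    | tmul c u =>
      rw [Algebra.TensorProduct.tmul_mul_tmul, TensorProduct.assoc_tmul,
        TensorProduct.assoc_tmul]
      simp [TensorProduct.map_tmul]
    | add Y₁ Y₂ ih₁ ih₂ =>
      rw [mul_add, add_tmul, LinearEquiv.map_add, ih₁, ih₂, add_tmul, LinearEquiv.map_add,
        map_add]
  have claimC : ∀ (a : H (1:π)) (b : H α) (c : H (1:π)) (w : H α ⊗[k] H α⁻¹),
      EE (TensorProduct.map (LinearMap.mulLeft k a)
          (TensorProduct.map (LinearMap.mulLeft k b) LinearMap.id) (c ⊗ₜ w)) =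
        lam 1 (a * c) • (b * (LinearMap.mul' k (H α))
          (TensorProduct.map LinearMap.id Sp w)) := by
    intro a b c w
    have hB : (LinearMap.mul' k (H α)) (TensorProduct.map LinearMap.id Sp
        (TensorProduct.map (LinearMap.mulLeft k b) LinearMap.id w)) =
        b * (LinearMap.mul' k (H α)) (TensorProduct.map LinearMap.id Sp w) := by
      induction w using TensorProduct.induction_on with
      | zero => simp
      | tmul u v =>
        simp [TensorProduct.map_tmul, LinearMap.mul'_apply, mul_assoc]
      | add w₁ w₂ ih₁ ih₂ =>
        rw [map_add, map_add, map_add, ih₁, ih₂, map_add, map_add, mul_add]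
    rw [TensorProduct.map_tmul, EEapp, hB]
    rfl
  have hjΛ : (∑ j ∈ sj, Hc.ε j.2 • j.1) = Λ := by
    have h1 := CRp Hc 1 Λ
    rw [hj, map_sum, map_sum] at h1
    simp only [TensorProduct.map_tmul, LinearMap.id_coe, id_eq, AlgHom.toLinearMap_apply,
      TensorProduct.rid_tmul] at h1
    exact h1
  have hxε : (∑ m ∈ sm, Hc.ε m.1 • m.2) = x := by
    have h1 := CLp Hc α x
    rw [hm, map_sum, map_sum] at h1
    simp only [TensorProduct.map_tmul, LinearMap.id_coe, id_eq, AlgHom.toLinearMap_apply,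
      TensorProduct.lid_tmul] at h1
    exact h1
  have hW : (∑ p ∈ s, (TensorProduct.assoc k (H (1:π)) (H α) (H α⁻¹))
      ((dtwo Hc α p.1) ⊗ₜ p.2)) = ∑ j ∈ sj, j.1 ⊗ₜ (dl Hc α j.2) := by
    have h1 := Rcoassoc2 Hc α Λ
    rw [hs, map_sum, map_sum, hj, map_sum] at h1
    simpa only [TensorProduct.map_tmul, LinearMap.id_coe, id_eq] using h1
  rw [hs, map_sum, map_sum]
  calc (∑ p ∈ s, (TensorProduct.lid k (H α))
        (TensorProduct.map ((lam α) ∘ₗ (LinearMap.mulLeft k x)) Sp (p.1 ⊗ₜ p.2)))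
      = ∑ p ∈ s, EE ((TensorProduct.assoc k (H (1:π)) (H α) (H α⁻¹))
          ((dtwo Hc α (x * p.1)) ⊗ₜ p.2)) := by
        refine Finset.sum_congr rfl fun p _ => ?_
        rw [claimA]
        simp [TensorProduct.map_tmul, TensorProduct.lid_tmul]
    _ = ∑ m ∈ sm, ∑ p ∈ s, EE (TensorProduct.map (LinearMap.mulLeft k m.1)
          (TensorProduct.map (LinearMap.mulLeft k m.2) LinearMap.id)
          ((TensorProduct.assoc k (H (1:π)) (H α) (H α⁻¹)) ((dtwo Hc α p.1) ⊗ₜ p.2))) := by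
        rw [Finset.sum_comm]
        refine Finset.sum_congr rfl fun p _ => ?_
        rw [dtwo_mul, hm, Finset.sum_mul, sum_tmul, map_sum, map_sum]
        refine Finset.sum_congr rfl fun m _ => ?_
        rw [claimB]
    _ = ∑ m ∈ sm, ∑ j ∈ sj, EE (TensorProduct.map (LinearMap.mulLeft k m.1)
          (TensorProduct.map (LinearMap.mulLeft k m.2) LinearMap.id)
          (j.1 ⊗ₜ (dl Hc α j.2))) := by
        refine Finset.sum_congr rfl fun m _ => ?_
        rw [← map_sum, ← map_sum, hW, map_sum, map_sum]
    _ = ∑ m ∈ sm, Hc.ε m.1 • m.2 := by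
        refine Finset.sum_congr rfl fun m _ => ?_
        calc (∑ j ∈ sj, EE (TensorProduct.map (LinearMap.mulLeft k m.1)
              (TensorProduct.map (LinearMap.mulLeft k m.2) LinearMap.id)
              (j.1 ⊗ₜ (dl Hc α j.2))))
            = ∑ j ∈ sj, Hc.ε j.2 • lam 1 (m.1 * j.1) • m.2 := by
              refine Finset.sum_congr rfl fun j _ => ?_
              rw [claimC, ARs]
              rw [mul_smul_comm, mul_one, smul_comm]
          _ = lam 1 (m.1 * Λ) • m.2 := by
              rw [← hjΛ, Finset.mul_sum, map_sum]
              rw [Finset.sum_smul]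
              refine Finset.sum_congr rfl fun j _ => ?_
              rw [mul_smul_comm, map_smul, smul_smul, ← smul_smul, smul_eq_mul,
                ← smul_smul]
          _ = Hc.ε m.1 • m.2 := by
              rw [hΛ, map_smul, hnorm, smul_eq_mul, mul_one]
    _ = x := hxε

include hlam hΛ hnorm in
/-- The dual expansion: `y = Σ λ_α(S'(Λ₍₂₎) y) Λ₍₁₎`. -/
theorem star (α : π) (y : H α) :
    (TensorProduct.rid k (H α)) (TensorProduct.map LinearMap.id
      ((lam α) ∘ₗ (LinearMap.mulRight k y) ∘ₗ ((Lcast k H (inv_inv α)).comp (Hc.S α⁻¹)))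
      (dl Hc α Λ)) = y := by
  set Sp : H α⁻¹ →ₗ[k] H α := (Lcast k H (inv_inv α)).comp (Hc.S α⁻¹) with hSp
  set Lm : H α →ₗ[k] Module.Dual k (H α) := (LinearMap.mul k (H α)).compr₂ (lam α) with hLm
  have hLmapp : ∀ x z : H α, Lm x z = lam α (x * z) := fun _ _ => rfl
  have hinj : Function.Injective Lm := by
    rw [injective_iff_map_eq_zero]
    intro x hx
    have h0 := starstar Hc lam hlam Λ hΛ hnorm α x
    have hφ : (lam α) ∘ₗ (LinearMap.mulLeft k x) = Lm x := by
      ext z; rfl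
    rw [hφ, hx, TensorProduct.map_zero_left, LinearMap.zero_apply, map_zero] at h0
    exact h0.symm
  have hsurj : Function.Surjective Lm := by
    have hf : Module.finrank k (H α) = Module.finrank k (Module.Dual k (H α)) :=
      (Subspace.dual_finrank_eq).symm
    exact (LinearMap.injective_iff_surjective_of_finrank_eq_finrank hf).mp hinj
  obtain ⟨s, hs⟩ := TensorProduct.exists_finset (dl Hc α Λ)
  have key : ∀ x : H α,
      Lm x ((TensorProduct.rid k (H α)) (TensorProduct.map LinearMap.id
        ((lam α) ∘ₗ (LinearMap.mulRight k y) ∘ₗ Sp) (dl Hc α Λ))) = Lm x y := by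
    intro x
    have hx : x = ∑ p ∈ s, lam α (x * p.1) • Sp p.2 := by
      have h0 := starstar Hc lam hlam Λ hΛ hnorm α x
      rw [hs, map_sum, map_sum] at h0
      simp only [TensorProduct.map_tmul, LinearMap.coe_comp, Function.comp_apply,
        LinearMap.mulLeft_apply, TensorProduct.lid_tmul] at h0
      exact h0.symm
    rw [hs, map_sum, map_sum, map_sum]
    calc (∑ p ∈ s, Lm x ((TensorProduct.rid k (H α)) (TensorProduct.map LinearMap.id
          ((lam α) ∘ₗ (LinearMap.mulRight k y) ∘ₗ Sp) (p.1 ⊗ₜ p.2))))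
        = ∑ p ∈ s, lam α (x * p.1) * lam α (Sp p.2 * y) := by
          refine Finset.sum_congr rfl fun p _ => ?_
          simp only [TensorProduct.map_tmul, LinearMap.id_coe, id_eq, LinearMap.coe_comp,
            Function.comp_apply, LinearMap.mulRight_apply, TensorProduct.rid_tmul,
            map_smul, hLmapp, smul_eq_mul]
          rw [mul_smul_comm, map_smul, smul_eq_mul, mul_comm]
      _ = lam α (x * y) := by
          conv_rhs => rw [hx]
          rw [Finset.sum_mul, map_sum]
          refine Finset.sum_congr rfl fun p _ => ?_
          rw [smul_mul_assoc, map_smul, smul_eq_mul]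
      _ = Lm x y := rfl
  have hzero : ∀ φ : Module.Dual k (H α),
      φ ((TensorProduct.rid k (H α)) (TensorProduct.map LinearMap.id
        ((lam α) ∘ₗ (LinearMap.mulRight k y) ∘ₗ Sp) (dl Hc α Λ)) - y) = 0 := by
    intro φ
    obtain ⟨x, rfl⟩ := hsurj φ
    rw [map_sub, key, sub_self]
  have := (Module.forall_dual_apply_eq_zero_iff k _).mp hzero
  exact sub_eq_zero.mp this

include hlam hΛ hnorm in
/-- The trace formula in terms of the dual bases coming from the integrals. -/
theorem traceformula (α : π) (f : H α →ₗ[k] H α) (s : Finset (H α × H α⁻¹))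
    (hs : dl Hc α Λ = ∑ p ∈ s, p.1 ⊗ₜ p.2) :
    LinearMap.trace k (H α) f =
      ∑ p ∈ s, lam α (((Lcast k H (inv_inv α)).comp (Hc.S α⁻¹)) p.2 * f p.1) := by
  set Sp : H α⁻¹ →ₗ[k] H α := (Lcast k H (inv_inv α)).comp (Hc.S α⁻¹) with hSp
  have idrep : ∀ z : H α, z = ∑ p ∈ s, lam α (Sp p.2 * z) • p.1 := by
    intro z
    have h0 := star Hc lam hlam Λ hΛ hnorm α z
    rw [hs, map_sum, map_sum] at h0
    simp only [TensorProduct.map_tmul, LinearMap.id_coe, id_eq, LinearMap.coe_comp,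
      Function.comp_apply, LinearMap.mulRight_apply, TensorProduct.rid_tmul] at h0
    exact h0.symm
  have frep : f = ∑ p ∈ s, (dualTensorHom k (H α) (H α))
      (((lam α) ∘ₗ (LinearMap.mulLeft k (Sp p.2))) ⊗ₜ f p.1) := by
    apply LinearMap.ext
    intro z
    rw [LinearMap.sum_apply]
    conv_lhs => rw [idrep z]
    rw [map_sum]
    refine Finset.sum_congr rfl fun p _ => ?_
    rw [map_smul, dualTensorHom_apply]
    simp
  conv_lhs => rw [frep, map_sum]
  refine Finset.sum_congr rfl fun p _ => ?_
  rw [LinearMap.trace_eq_contract_apply, contractLeft_apply]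
  rfl
end mainsec

/-- Let `H` be a finite type Hopf `π`-coalgebra, `λ = (λ_α)` a right `π`-integral for `H`
and `Λ` a left integral for `H 1` with `λ_1 Λ = 1`.  Then for every `α` and `a ∈ H α`,
`Tr (r(a) ∘ S_{α⁻¹} S_α) = ε(Λ) λ_α(a)`, where `r(a)` is right multiplication by `a`. -/
theorem trace_mulRight_antipode_square (k : Type*) [Field k] (π : Type*) [Group π]
    (H : π → Type*) [∀ α, Ring (H α)] [∀ α, Algebra k (H α)]
    [∀ α, FiniteDimensional k (H α)]
    (Hc : HopfGroupCoalgebra k π H)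
    (lam : ∀ α : π, H α →ₗ[k] k)
    (hlam : ∀ (α β : π) (x : H (α * β)),
      (TensorProduct.lid k (H β))
          (TensorProduct.map (lam α) LinearMap.id (Hc.Δ α β x)) =
        lam (α * β) x • (1 : H β))
    (Λ : H (1 : π))
    (hΛ : ∀ x : H (1 : π), x * Λ = Hc.ε x • Λ)
    (hnorm : lam 1 Λ = 1) :
    ∀ (α : π) (a : H α),
      LinearMap.trace k (H α)
          ((LinearMap.mulRight k a).comp
            ((Lcast k H (inv_inv α)).comp ((Hc.S α⁻¹).comp (Hc.S α)))) =
        Hc.ε Λ * lam α a := by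
  intro α a
  obtain ⟨s, hs⟩ := TensorProduct.exists_finset (dl Hc α Λ)
  rw [traceformula Hc lam hlam Λ hΛ hnorm α _ s hs]
  set Sp : H α⁻¹ →ₗ[k] H α := (Lcast k H (inv_inv α)).comp (Hc.S α⁻¹) with hSp
  have hanti : ∀ u v : H α⁻¹, Sp (u * v) = Sp v * Sp u := by
    intro u v
    rw [hSp, LinearMap.comp_apply, S_antimul, Lcast_mul]
    rfl
  have hSp1 : Sp (1 : H α⁻¹) = 1 := by
    rw [hSp, LinearMap.comp_apply, S_one, Lcast_one]
  have hALrep : (∑ p ∈ s, Hc.S α p.1 * p.2) = Hc.ε Λ • 1 := by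
    have h0 := ALp Hc α Λ
    rw [hs, map_sum, map_sum] at h0
    simpa only [TensorProduct.map_tmul, LinearMap.id_coe, id_eq,
      LinearMap.mul'_apply] using h0
  calc (∑ p ∈ s, lam α (Sp p.2 *
        ((LinearMap.mulRight k a).comp
          ((Lcast k H (inv_inv α)).comp ((Hc.S α⁻¹).comp (Hc.S α))) p.1)))
      = ∑ p ∈ s, lam α (Sp (Hc.S α p.1 * p.2) * a) := by
        refine Finset.sum_congr rfl fun p _ => ?_
        have h1 : ((LinearMap.mulRight k a).comp
            ((Lcast k H (inv_inv α)).comp ((Hc.S α⁻¹).comp (Hc.S α))) p.1)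
            = Sp (Hc.S α p.1) * a := rfl
        rw [h1, hanti, mul_assoc]
    _ = lam α (Sp (∑ p ∈ s, Hc.S α p.1 * p.2) * a) := by
        rw [map_sum, Finset.sum_mul, map_sum]
    _ = Hc.ε Λ * lam α a := by
        rw [hALrep, map_smul, hSp1, smul_mul_assoc, one_mul, map_smul, smul_eq_mul]
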